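/- For every integer n ≥ 1, let F_n(z) = Σ_{k≥0} n^k · catalan(k) · z^{2k} ∈ ℚ[[z]], let S_n(z) = 1 − 2n·z²·F_n(z) (the power series expansion of √(1−4nz²)), and let E_n(z) = 1 − (2n²+4n+3)z + (4n³+4n²+3n+1/2)z² + z³ + (1/2)z²·S_n(z) ∈ ℚ[[z]]. Then E_n has constant term 1 (so it is invertible in ℚ[[z]]), and its inverse H = E_n^{−1} is not a rational function: there do not exist polynomials p, q ∈ ℚ[z] with q ≠ 0 such that q·H = p in ℚ[[z]]. (H is the Hilbert series of the finitely presented graded algebra A of Example 1, constructed from L = D_n, and the statement is the paper's claim that this Hilbert series is a non-rational algebraic function.) -/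

import Mathlib

/-- The generating function of the Dyck language `Dₙ`:
`Fₙ(z) = Σ_{k≥0} nᵏ · catalan k · z^{2k}` in `ℚ[[z]]`. -/
noncomputable def dyckGF (n : ℕ) : PowerSeries ℚ :=
  PowerSeries.mk fun m => if m % 2 = 0 then (n : ℚ) ^ (m / 2) * catalan (m / 2) else 0

/-- `Sₙ(z) = 1 − 2n·z²·Fₙ(z)`, the power series expansion of `√(1 − 4nz²)`. -/
noncomputable def sqrtSeries (n : ℕ) : PowerSeries ℚ :=
  1 - 2 * (n : PowerSeries ℚ) * PowerSeries.X ^ 2 * dyckGF n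

/-- `Eₙ(z) = 1 − (2n²+4n+3)z + (4n³+4n²+3n+1/2)z² + z³ + (1/2)z²·Sₙ(z)`,
the inverse of the Hilbert series of the algebra of Example 1. -/
noncomputable def E (n : ℕ) : PowerSeries ℚ :=
  1 - PowerSeries.C (R := ℚ) (2 * (n : ℚ) ^ 2 + 4 * n + 3) * PowerSeries.X
    + PowerSeries.C (R := ℚ) (4 * (n : ℚ) ^ 3 + 4 * n ^ 2 + 3 * n + 1 / 2) * PowerSeries.X ^ 2
    + PowerSeries.X ^ 3
    + PowerSeries.C (R := ℚ) (1 / 2) * PowerSeries.X ^ 2 * sqrtSeries n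

open PowerSeries Polynomial in
lemma dyckGF_sq_coeff_even (n k : ℕ) :
    PowerSeries.coeff (R := ℚ) (2 * k) ((dyckGF n) ^ 2) = (n : ℚ) ^ k * catalan (k + 1) := by
  rw [sq, PowerSeries.coeff_mul, Finset.Nat.sum_antidiagonal_eq_sum_range_succ_mk]
  have himage : ∀ i ∈ Finset.range (2 * k + 1), i ∉ Finset.image (fun j => 2 * j) (Finset.range (k + 1)) →
      (PowerSeries.coeff (R := ℚ) i) (dyckGF n) * (PowerSeries.coeff (R := ℚ) (2 * k - i)) (dyckGF n) = 0 := by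
    intro i hi hni
    have : i % 2 = 1 := by
      rcases Nat.even_or_odd i with he | ho
      · exfalso; apply hni
        obtain ⟨j, rfl⟩ := he
        simp only [Finset.mem_image, Finset.mem_range] at hi ⊢
        exact ⟨j, by omega, by ring⟩
      · exact Nat.odd_iff.mp ho
    simp [dyckGF, PowerSeries.coeff_mk, this]
  rw [← Finset.sum_subset (by
      intro x hx
      simp only [Finset.mem_image, Finset.mem_range] at hx ⊢
      obtain ⟨j, hj, rfl⟩ := hx; omega) himage]
  rw [Finset.sum_image (by intros a _ b _ h; beta_reduce at h; omega)]
  have : ∀ j ∈ Finset.range (k + 1),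
      (PowerSeries.coeff (R := ℚ) (2 * j)) (dyckGF n) * (PowerSeries.coeff (R := ℚ) (2 * k - 2 * j)) (dyckGF n)
        = (n : ℚ) ^ k * (catalan j * catalan (k - j)) := by
    intro j hj
    simp only [Finset.mem_range] at hj
    have h1 : 2 * k - 2 * j = 2 * (k - j) := by omega
    simp only [dyckGF, PowerSeries.coeff_mk, h1, Nat.mul_mod_right, if_pos rfl, if_true,
      Nat.mul_div_cancel_left _ (by norm_num : 0 < 2)]
    have hpow : (n:ℚ)^j * (n:ℚ)^(k-j) = (n:ℚ)^k := by
      rw [← pow_add, Nat.add_sub_cancel' (by omega)]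
    rw [← hpow]; ring
  rw [Finset.sum_congr rfl this, ← Finset.mul_sum]
  congr 1
  rw [catalan_succ]
  push_cast [Finset.sum_range]
  rfl

open PowerSeries in
lemma dyckGF_sq_coeff_odd (n k : ℕ) (hk : k % 2 = 1) :
    PowerSeries.coeff (R := ℚ) k ((dyckGF n) ^ 2) = 0 := by
  rw [sq, PowerSeries.coeff_mul]
  apply Finset.sum_eq_zero
  intro p hp
  rw [Finset.HasAntidiagonal.mem_antidiagonal] at hp
  have : p.1 % 2 = 1 ∨ p.2 % 2 = 1 := by omega
  rcases this with h | h <;> simp [dyckGF, PowerSeries.coeff_mk, h]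

open PowerSeries in
lemma dyckGF_eq (n : ℕ) :
    dyckGF n = 1 + (n : PowerSeries ℚ) * PowerSeries.X ^ 2 * (dyckGF n) ^ 2 := by
  ext m
  rw [map_add]
  have hc : ((n : PowerSeries ℚ) * PowerSeries.X ^ 2 * (dyckGF n) ^ 2)
      = ((dyckGF n) ^ 2 * PowerSeries.X ^ 2) * (PowerSeries.C (R := ℚ) (n : ℚ)) := by
    rw [show ((n : PowerSeries ℚ)) = PowerSeries.C (R := ℚ) (n : ℚ) by push_cast; rfl]; ring
  rw [hc]
  match m with
  | 0 => simp [dyckGF, PowerSeries.coeff_mk]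
  | 1 =>
    rw [PowerSeries.coeff_one]
    simp only [dyckGF, PowerSeries.coeff_mk]
    rw [PowerSeries.coeff_mul_C, PowerSeries.coeff_mul_X_pow']
    norm_num
  | (d + 2) =>
    rw [PowerSeries.coeff_one, PowerSeries.coeff_mul_C,
      show d + 2 = d + 2 from rfl, PowerSeries.coeff_mul_X_pow]
    rcases Nat.even_or_odd d with ⟨j, rfl⟩ | ho
    · rw [show j + j = 2 * j by ring, dyckGF_sq_coeff_even]
      simp only [dyckGF, PowerSeries.coeff_mk]
      rw [if_pos (by omega), show (2 * j + 2) / 2 = j + 1 by omega]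
      push_cast; ring
    · have h1 : d % 2 = 1 := Nat.odd_iff.mp ho
      rw [dyckGF_sq_coeff_odd n d h1]
      simp only [dyckGF, PowerSeries.coeff_mk]
      rw [if_neg (by omega)]
      simp

open PowerSeries in
lemma sqrtSeries_sq (n : ℕ) :
    (sqrtSeries n) ^ 2 = 1 - 4 * (n : PowerSeries ℚ) * PowerSeries.X ^ 2 := by
  have h := dyckGF_eq n
  unfold sqrtSeries
  linear_combination (-(4:PowerSeries ℚ) * (n : PowerSeries ℚ) * PowerSeries.X ^ 2) * h

/-- `Eₙ` has constant term `1` (hence is invertible in `ℚ[[z]]`), and its inverse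
`H = Eₙ⁻¹` — the Hilbert series of the algebra of Example 1 — is not a rational
function. -/
theorem stmt_8 (n : ℕ) (hn : 1 ≤ n) :
    PowerSeries.constantCoeff (R := ℚ) (E n) = 1 ∧
    ¬ ∃ (p q : Polynomial ℚ), q ≠ 0 ∧
      (q : PowerSeries ℚ) * (E n)⁻¹ = (p : PowerSeries ℚ) := by
  have hE0 : PowerSeries.constantCoeff (R := ℚ) (E n) = 1 := by
    simp [E, sqrtSeries]
  refine ⟨hE0, ?_⟩
  rintro ⟨p, q, hq, hpq⟩
  -- q = p * E n
  have hinv : (E n)⁻¹ * E n = 1 :=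
    PowerSeries.inv_mul_cancel _ (by rw [hE0]; norm_num)
  have hqE : (q : PowerSeries ℚ) = (p : PowerSeries ℚ) * E n := by
    calc (q : PowerSeries ℚ) = (q : PowerSeries ℚ) * ((E n)⁻¹ * E n) := by rw [hinv, mul_one]
    _ = ((q : PowerSeries ℚ) * (E n)⁻¹) * E n := by ring
    _ = (p : PowerSeries ℚ) * E n := by rw [hpq]
  have hp : p ≠ 0 := by
    rintro rfl
    rw [Polynomial.coe_zero, zero_mul, ← Polynomial.coe_zero, Polynomial.coe_inj] at hqE
    exact hq hqE
  -- the polynomial part of E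
  set a : Polynomial ℚ := 1 - Polynomial.C (2 * (n : ℚ) ^ 2 + 4 * n + 3) * Polynomial.X
    + Polynomial.C (4 * (n : ℚ) ^ 3 + 4 * n ^ 2 + 3 * n + 1 / 2) * Polynomial.X ^ 2
    + Polynomial.X ^ 3 with ha
  have hEa : E n = (a : PowerSeries ℚ)
      + PowerSeries.C (R := ℚ) (1 / 2) * PowerSeries.X ^ 2 * sqrtSeries n := by
    rw [ha]
    push_cast [Polynomial.coe_add, Polynomial.coe_sub, Polynomial.coe_mul, Polynomial.coe_pow,
      Polynomial.coe_C, Polynomial.coe_X, Polynomial.coe_one]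
    rw [E]
  set b : Polynomial ℚ := Polynomial.C 2 * (q - p * a) with hb
  set c : Polynomial ℚ := p * Polynomial.X ^ 2 with hc
  have h2 : (PowerSeries.C (R := ℚ)) (1 / 2) * 2 = 1 := by
    rw [show (2 : PowerSeries ℚ) = PowerSeries.C (R := ℚ) 2 from (map_ofNat _ 2).symm, ← map_mul]
    norm_num
  have hS : (c : PowerSeries ℚ) * sqrtSeries n = (b : PowerSeries ℚ) := by
    rw [hEa] at hqE
    push_cast [hb, hc, Polynomial.coe_mul, Polynomial.coe_sub, Polynomial.coe_C,
      Polynomial.coe_pow, Polynomial.coe_X]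
    rw [show (PowerSeries.C (R := ℚ)) (2:ℚ) = 2 from map_ofNat _ 2]
    linear_combination (-2 : PowerSeries ℚ) * hqE
      - ((p : PowerSeries ℚ) * PowerSeries.X ^ 2 * sqrtSeries n) * h2
  set r : Polynomial ℚ := 1 - Polynomial.C (4 * (n : ℚ)) * Polynomial.X ^ 2 with hr
  have hrc : (r : PowerSeries ℚ) = 1 - 4 * (n : PowerSeries ℚ) * PowerSeries.X ^ 2 := by
    push_cast [hr, Polynomial.coe_sub, Polynomial.coe_mul, Polynomial.coe_C,
      Polynomial.coe_pow, Polynomial.coe_X, Polynomial.coe_one]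
    rw [show (PowerSeries.C (R := ℚ)) (4 * (n:ℚ)) = 4 * (n : PowerSeries ℚ) by
      rw [map_mul, map_natCast, map_ofNat]]
  have hsq : ((b ^ 2 : Polynomial ℚ) : PowerSeries ℚ) = ((r * c ^ 2 : Polynomial ℚ) : PowerSeries ℚ) := by
    push_cast [Polynomial.coe_mul, Polynomial.coe_pow]
    rw [hrc]
    linear_combination (-(b : PowerSeries ℚ) - (c : PowerSeries ℚ) * sqrtSeries n) * hS
      + ((c : PowerSeries ℚ))^2 * sqrtSeries_sq n
  have hpoly : b ^ 2 = r * c ^ 2 := Polynomial.coe_inj.mp hsq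
  -- move to ℝ
  have hcne : c ≠ 0 := mul_ne_zero hp (pow_ne_zero _ Polynomial.X_ne_zero)
  set φ := Polynomial.map (algebraMap ℚ ℝ) with hφ
  have hinj : Function.Injective (algebraMap ℚ ℝ) := (algebraMap ℚ ℝ).injective
  have hR : φ b ^ 2 = φ r * φ c ^ 2 := by
    rw [hφ]; simp only [← Polynomial.map_pow, ← Polynomial.map_mul, hpoly]
  have hCne : φ c ≠ 0 := by
    rw [hφ, Ne, Polynomial.map_eq_zero_iff hinj]; exact hcne
  -- the root α
  have hn' : (0:ℝ) < n := by exact_mod_cast hn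
  set α : ℝ := (2 * Real.sqrt n)⁻¹ with hα
  have hsqrt : (0:ℝ) < Real.sqrt n := Real.sqrt_pos.mpr hn'
  have hαpos : 0 < α := by positivity
  have hα2 : α ^ 2 = (4 * (n:ℝ))⁻¹ := by
    rw [hα]; field_simp; rw [Real.sq_sqrt hn'.le]; ring
  have h4n : (4 * (n:ℝ)) ≠ 0 := by positivity
  have hRfac : φ r = Polynomial.C (-(4 * (n:ℝ))) * (Polynomial.X - Polynomial.C α)
      * (Polynomial.X + Polynomial.C α) := by
    rw [show Polynomial.C (-(4 * (n:ℝ))) * (Polynomial.X - Polynomial.C α)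
        * (Polynomial.X + Polynomial.C α)
        = Polynomial.C (-(4 * (n:ℝ))) * (Polynomial.X ^ 2 - Polynomial.C α ^ 2) by ring,
      ← map_pow, hα2, hφ, hr]
    rw [Polynomial.map_sub, Polynomial.map_mul, Polynomial.map_pow, Polynomial.map_one,
      Polynomial.map_C, Polynomial.map_X, mul_sub, ← map_mul]
    rw [show -(4 * (n:ℝ)) * (4 * (n:ℝ))⁻¹ = -1 by field_simp]
    rw [show (algebraMap ℚ ℝ) (4 * (n:ℚ)) = 4 * (n:ℝ) by rw [map_mul, map_natCast, map_ofNat]]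
    simp only [map_neg, map_one]
    ring
  have hRne : φ r ≠ 0 := by
    rw [hRfac]
    exact mul_ne_zero (mul_ne_zero (Polynomial.C_ne_zero.mpr (neg_ne_zero.mpr h4n))
      (Polynomial.X_sub_C_ne_zero α)) (by
        rw [show Polynomial.X + Polynomial.C α = Polynomial.X - Polynomial.C (-α) by
          rw [map_neg, sub_neg_eq_add]]
        exact Polynomial.X_sub_C_ne_zero _)
  have hBne : φ b ≠ 0 := by
    intro h
    rw [h] at hR
    exact (mul_ne_zero hRne (pow_ne_zero _ hCne)) (by rw [← hR]; ring)
  -- root multiplicities at α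
  have hmulR : (φ r).rootMultiplicity α = 1 := by
    rw [hRfac, Polynomial.rootMultiplicity_mul (by
        rw [← hRfac]; exact hRne),
      Polynomial.rootMultiplicity_mul (by
        exact mul_ne_zero (Polynomial.C_ne_zero.mpr (neg_ne_zero.mpr h4n)) (Polynomial.X_sub_C_ne_zero α)),
      Polynomial.rootMultiplicity_C, Polynomial.rootMultiplicity_X_sub_C_self,
      Polynomial.rootMultiplicity_eq_zero (by
        simp only [Polynomial.IsRoot, Polynomial.eval_add, Polynomial.eval_X, Polynomial.eval_C]
        intro h; nlinarith)]
  have hmul2 : ∀ s : Polynomial ℝ, s ≠ 0 →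
      (s ^ 2).rootMultiplicity α = 2 * s.rootMultiplicity α := by
    intro s hs
    rw [sq, Polynomial.rootMultiplicity_mul (mul_ne_zero hs hs)]
    ring
  have hfinal : 2 * (φ b).rootMultiplicity α
      = 1 + 2 * (φ c).rootMultiplicity α := by
    rw [← hmul2 _ hBne, hR,
      Polynomial.rootMultiplicity_mul (mul_ne_zero hRne (pow_ne_zero _ hCne)),
      hmulR, hmul2 _ hCne]
  omega
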